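/- Let n ≥ 2. For every γ ∈ ∂N_n (the set of tame natural d-paths in [0,1]^n whose image meets {0,1}^n \ {0_n, 1_n}), the image γ([0,n]) is contained in the topological boundary of [0,1]^n, i.e. for every t some coordinate of γ(t) lies in {0,1}. -/
import Mathlib


open Set

/-- A tame natural d-path of the topological `n`-cube `[0,1]^n`: a continuous map
`γ : [0,n] → [0,1]^n`, nondecreasing in each coordinate, whose endpoints are
vertices, and such that the sum of the coordinates of `γ t` equals `t`. -/
def IsNatPath (n : ℕ) (γ : ℝ → Fin n → ℝ) : Prop :=
  ContinuousOn γ (Icc 0 n) ∧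
  (∀ t ∈ Icc (0:ℝ) n, ∀ i, γ t i ∈ Icc (0:ℝ) 1) ∧
  (∀ s ∈ Icc (0:ℝ) n, ∀ t ∈ Icc (0:ℝ) n, s ≤ t → ∀ i, γ s i ≤ γ t i) ∧
  (∀ i, γ 0 i = 0 ∨ γ 0 i = 1) ∧
  (∀ i, γ (n:ℝ) i = 0 ∨ γ (n:ℝ) i = 1) ∧
  (∀ t ∈ Icc (0:ℝ) n, ∑ i, γ t i = t)

/-- If a tame natural d-path in [0,1]^n (n ≥ 2) passes through a vertex other than
(0,…,0) and (1,…,1), then its image is contained in the topological boundary of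
[0,1]^n: at every time some coordinate is 0 or 1. -/
theorem natPath_boundary_image (n : ℕ) (hn : 2 ≤ n) (γ : ℝ → Fin n → ℝ)
    (hγ : IsNatPath n γ)
    (hmeet : ∃ t₀ ∈ Icc (0:ℝ) n, (∀ i, γ t₀ i = 0 ∨ γ t₀ i = 1) ∧
      ¬ (∀ i, γ t₀ i = 0) ∧ ¬ (∀ i, γ t₀ i = 1)) :
    ∀ t ∈ Icc (0:ℝ) n, ∃ i, γ t i = 0 ∨ γ t i = 1 := by
  obtain ⟨_, hbox, hmono, _, _, _⟩ := hγ
  obtain ⟨t₀, ht₀, hv, hn0, hn1⟩ := hmeet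
  push_neg at hn0 hn1
  obtain ⟨i, hi⟩ := hn0
  obtain ⟨j, hj⟩ := hn1
  have hi1 : γ t₀ i = 1 := (hv i).resolve_left hi
  have hj0 : γ t₀ j = 0 := (hv j).resolve_right hj
  intro t ht
  rcases le_total t t₀ with h | h
  · refine ⟨j, Or.inl ?_⟩
    have h1 := hmono t ht t₀ ht₀ h j
    have h2 := (hbox t ht j).1
    linarith [hj0]
  · refine ⟨i, Or.inr ?_⟩
    have h1 := hmono t₀ ht₀ t ht h i
    have h2 := (hbox t ht i).2
    linarith [hi1]
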